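/- Fix A > 0 and 0 < ε < 1/7. Let Y be the 2N×2N block-diagonal matrix with j-th 2×2 block c_j·J₀, where |c_j| ≤ A for each j, and define ω(ξ,ζ) = dλ(ξ,ζ) + ⟨Y·ξ^h, ζ^h⟩ on ℝ^{4N}. Let J be a linear map on ℝ^{4N} with J² = −Id that is compatible with dλ and satisfies ‖J − 𝕁_A‖ < ε in the operator norm. Then J is uniformly tamed by ω: for every nonzero ξ ∈ ℝ^{4N}, ω(Jξ, ξ) > (1/4)·dλ(Jξ, ξ) (in particular ω(Jξ,ξ) > 0). -/

import Mathlib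

open Real
open scoped RealInnerProductSpace

noncomputable section

/-- Configuration space ℝ^{2N}: coordinate `(j, s)` is the `s`-th coordinate of the
`j`-th particle, with the Euclidean norm. -/
abbrev Conf (N : ℕ) := EuclideanSpace ℝ (Fin N × Fin 2)

/-- Phase space ℝ^{4N} = ℝ^{2N} ⊕ ℝ^{2N} (horizontal ⊕ vertical), with the Euclidean norm. -/
abbrev Phase (N : ℕ) := WithLp 2 (Conf N × Conf N)

/-- The horizontal part `ξ^h`. -/
def hpart {N : ℕ} (ξ : Phase N) : Conf N := (WithLp.equiv 2 (Conf N × Conf N) ξ).1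

/-- The vertical part `ξ^v`. -/
def vpart {N : ℕ} (ξ : Phase N) : Conf N := (WithLp.equiv 2 (Conf N × Conf N) ξ).2

/-- The standard symplectic form `dλ(ξ,ζ) = ⟨ξ^v, ζ^h⟩ − ⟨ξ^h, ζ^v⟩`. -/
def dlam {N : ℕ} (ξ ζ : Phase N) : ℝ := ⟪vpart ξ, hpart ζ⟫ - ⟪hpart ξ, vpart ζ⟫

/-- The rescaled complex structure `𝕁_A(ξ^h, ξ^v) = (−ξ^v/A, A·ξ^h)`. -/
def JA (N : ℕ) (A : ℝ) : Phase N →L[ℝ] Phase N :=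
  ((WithLp.prodContinuousLinearEquiv 2 ℝ (Conf N) (Conf N)).symm :
      (Conf N × Conf N) ≃L[ℝ] Phase N).toContinuousLinearMap ∘L
  (((-(A⁻¹)) • (ContinuousLinearMap.snd ℝ (Conf N) (Conf N))).prod
    (A • (ContinuousLinearMap.fst ℝ (Conf N) (Conf N)))) ∘L
  ((WithLp.prodContinuousLinearEquiv 2 ℝ (Conf N) (Conf N)) :
      Phase N ≃L[ℝ] (Conf N × Conf N)).toContinuousLinearMap

/-- The block-diagonal matrix `Y` with `j`-th 2×2 block `c_j·J₀`, acting on ℝ^{2N}. -/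
def rotAct {N : ℕ} (c : Fin N → ℝ) (v : Conf N) : Conf N :=
  WithLp.toLp 2 fun i => if i.2 = (0 : Fin 2) then -(c i.1) * v (i.1, 1) else (c i.1) * v (i.1, 0)

-- aux lemmas
lemma hpart_add {N} (u v : Phase N) : hpart (u + v) = hpart u + hpart v := rfl
lemma vpart_add {N} (u v : Phase N) : vpart (u + v) = vpart u + vpart v := rfl
lemma hpart_sub {N} (u v : Phase N) : hpart (u - v) = hpart u - hpart v := rfl
lemma vpart_sub {N} (u v : Phase N) : vpart (u - v) = vpart u - vpart v := rfl
lemma hpart_neg {N} (u : Phase N) : hpart (-u) = -hpart u := rfl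
lemma vpart_neg {N} (u : Phase N) : vpart (-u) = -vpart u := rfl
lemma hpart_smul {N} (r : ℝ) (u : Phase N) : hpart (r • u) = r • hpart u := rfl
lemma vpart_smul {N} (r : ℝ) (u : Phase N) : vpart (r • u) = r • vpart u := rfl
lemma hpart_JA {N} (A : ℝ) (u : Phase N) : hpart (JA N A u) = (-(A⁻¹)) • vpart u := rfl
lemma vpart_JA {N} (A : ℝ) (u : Phase N) : vpart (JA N A u) = A • hpart u := rfl
lemma norm_sq_phase {N} (u : Phase N) : ‖u‖^2 = ‖hpart u‖^2 + ‖vpart u‖^2 :=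
  WithLp.prod_norm_sq_eq_of_L2 u
lemma norm_hpart_le {N} (u : Phase N) : ‖hpart u‖ ≤ ‖u‖ := by
  nlinarith [norm_sq_phase u, norm_nonneg (hpart u), norm_nonneg u, sq_nonneg ‖vpart u‖]
lemma norm_vpart_le {N} (u : Phase N) : ‖vpart u‖ ≤ ‖u‖ := by
  nlinarith [norm_sq_phase u, norm_nonneg (vpart u), norm_nonneg u, sq_nonneg ‖hpart u‖]
def Phi {N : ℕ} (x : Conf N) : Phase N := (WithLp.equiv 2 (Conf N × Conf N)).symm (0, x)
lemma hpart_Phi {N} (x : Conf N) : hpart (Phi x) = 0 := rfl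
lemma vpart_Phi {N} (x : Conf N) : vpart (Phi x) = x := rfl
lemma norm_Phi {N} (x : Conf N) : ‖Phi x‖ = ‖x‖ := by
  have h := norm_sq_phase (Phi x)
  rw [hpart_Phi, vpart_Phi, norm_zero] at h
  nlinarith [norm_nonneg (Phi x), norm_nonneg x]

lemma dlam_antisymm {N} (u v : Phase N) : dlam u v = -dlam v u := by
  unfold dlam
  rw [real_inner_comm (vpart u) (hpart v), real_inner_comm (hpart u) (vpart v)]
  ring

lemma dlam_sub_left {N} (u v w : Phase N) : dlam (u - v) w = dlam u w - dlam v w := by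
  simp [dlam, hpart_sub, vpart_sub, inner_sub_left]; ring
lemma dlam_sub_right {N} (u v w : Phase N) : dlam u (v - w) = dlam u v - dlam u w := by
  simp [dlam, hpart_sub, vpart_sub, inner_sub_right]; ring
lemma dlam_add_left {N} (u v w : Phase N) : dlam (u + v) w = dlam u w + dlam v w := by
  simp [dlam, hpart_add, vpart_add, inner_add_left]; ring
lemma dlam_add_right {N} (u v w : Phase N) : dlam u (v + w) = dlam u v + dlam u w := by
  simp [dlam, hpart_add, vpart_add, inner_add_right]; ring
lemma dlam_neg_left {N} (u v : Phase N) : dlam (-u) v = -dlam u v := by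
  simp [dlam, hpart_neg, vpart_neg, inner_neg_left]; ring
lemma dlam_neg_right {N} (u v : Phase N) : dlam u (-v) = -dlam u v := by
  simp [dlam, hpart_neg, vpart_neg, inner_neg_right]; ring
lemma dlam_smul_left {N} (r : ℝ) (u v : Phase N) : dlam (r • u) v = r * dlam u v := by
  simp [dlam, hpart_smul, vpart_smul, inner_smul_left]; ring
lemma dlam_smul_right {N} (r : ℝ) (u v : Phase N) : dlam u (r • v) = r * dlam u v := by
  simp [dlam, hpart_smul, vpart_smul, inner_smul_right]; ring
lemma dlam_zero_zero {N} : dlam (0 : Phase N) 0 = 0 := by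
  have : hpart (0 : Phase N) = 0 := rfl
  have : vpart (0 : Phase N) = 0 := rfl
  simp [dlam, ‹hpart (0 : Phase N) = 0›, ‹vpart (0 : Phase N) = 0›]

lemma rotAct_norm_le {N} (c : Fin N → ℝ) (A : ℝ) (hA : 0 ≤ A) (hc : ∀ j, |c j| ≤ A)
    (v : Conf N) : ‖rotAct c v‖ ≤ A * ‖v‖ := by
  have hsum : ∑ i : Fin N × Fin 2, ‖rotAct c v i‖^2 ≤ A^2 * ‖v‖^2 := by
    have hv : ‖v‖^2 = ∑ i : Fin N × Fin 2, ‖v i‖^2 := by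
      rw [EuclideanSpace.norm_eq]
      rw [Real.sq_sqrt (by positivity)]
    rw [hv, Finset.mul_sum]
    rw [Fintype.sum_prod_type, Fintype.sum_prod_type]
    apply Finset.sum_le_sum
    intro j _
    rw [Fin.sum_univ_two, Fin.sum_univ_two]
    have h0 : rotAct c v (j, 0) = -(c j) * v (j, 1) := by simp [rotAct]
    have h1 : rotAct c v (j, 1) = (c j) * v (j, 0) := by simp [rotAct]
    rw [h0, h1]
    have hcj : (c j)^2 ≤ A^2 := by
      have := hc j
      nlinarith [abs_nonneg (c j), sq_abs (c j)]
    simp only [Real.norm_eq_abs]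
    rw [sq_abs, sq_abs, sq_abs, sq_abs]
    nlinarith [sq_nonneg (v (j,0)), sq_nonneg (v (j,1))]
  have h2 : ‖rotAct c v‖^2 = ∑ i : Fin N × Fin 2, ‖rotAct c v i‖^2 := by
    rw [EuclideanSpace.norm_eq, Real.sq_sqrt (by positivity)]
  nlinarith [norm_nonneg (rotAct c v), norm_nonneg v, h2, mul_nonneg hA (norm_nonneg v)]

set_option maxHeartbeats 2000000 in
theorem uniformly_tame
    (N : ℕ) (A ε : ℝ) (hA : 0 < A) (hε : 0 < ε) (hε7 : ε < 1 / 7)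
    (c : Fin N → ℝ) (hc : ∀ j, |c j| ≤ A)
    (J : Phase N →L[ℝ] Phase N)
    (hJ2 : ∀ ξ, J (J ξ) = -ξ)
    (hsymm : ∀ ξ ζ, dlam (J ξ) ζ = dlam (J ζ) ξ)
    (hposdef : ∀ ξ : Phase N, ξ ≠ 0 → 0 < dlam (J ξ) ξ)
    (hnorm : ‖J - JA N A‖ < ε) :
    ∀ ξ : Phase N, ξ ≠ 0 →
      (1 / 4) * dlam (J ξ) ξ < dlam (J ξ) ξ + ⟪rotAct c (hpart (J ξ)), hpart ξ⟫ := by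
  intro ξ hξ
  set K : ℝ := 1 + ε + ε^2 with hK
  clear_value K
  -- operator norm bound
  have hEb : ∀ u : Phase N, ‖J u - JA N A u‖ ≤ ε * ‖u‖ := by
    intro u
    have h := (J - JA N A).le_opNorm u
    simp only [ContinuousLinearMap.sub_apply] at h
    calc ‖J u - JA N A u‖ ≤ ‖J - JA N A‖ * ‖u‖ := h
      _ ≤ ε * ‖u‖ := mul_le_mul_of_nonneg_right hnorm.le (norm_nonneg u)
  -- norm of J (Phi x)
  have hJAPhi : ∀ x : Conf N, ‖JA N A (Phi x)‖ = A⁻¹ * ‖x‖ := by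
    intro x
    have h := norm_sq_phase (JA N A (Phi x))
    rw [hpart_JA, vpart_JA, hpart_Phi, vpart_Phi, smul_zero, norm_zero, norm_smul] at h
    simp only [Real.norm_eq_abs, abs_neg, abs_inv, abs_of_pos hA] at h
    have h1 : (0:ℝ) ≤ A⁻¹ * ‖x‖ := by positivity
    nlinarith [norm_nonneg (JA N A (Phi x))]
  have hJPhi : ∀ x : Conf N, ‖J (Phi x)‖ ≤ (A⁻¹ + ε) * ‖x‖ := by
    intro x
    have h1 := hEb (Phi x)
    rw [norm_Phi] at h1
    have h2 := norm_sub_norm_le (J (Phi x)) (JA N A (Phi x))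
    rw [hJAPhi] at h2
    linarith
  -- bound on B x = hpart (J (Phi x))
  have hB1 : ∀ x : Conf N, ‖hpart (J (Phi x))‖ ≤ (A⁻¹ + ε) * ‖x‖ := by
    intro x
    have h1 : ‖hpart (J (Phi x)) - hpart (JA N A (Phi x))‖ ≤ ε * ‖x‖ := by
      rw [← hpart_sub]
      calc ‖hpart (J (Phi x) - JA N A (Phi x))‖ ≤ ‖J (Phi x) - JA N A (Phi x)‖ :=
            norm_hpart_le _
        _ ≤ ε * ‖Phi x‖ := hEb _
        _ = ε * ‖x‖ := by rw [norm_Phi]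
    have h2 : ‖hpart (JA N A (Phi x))‖ = A⁻¹ * ‖x‖ := by
      rw [hpart_JA, vpart_Phi, norm_smul]
      simp [abs_of_pos hA]
    have h3 := norm_sub_norm_le (hpart (J (Phi x))) (hpart (JA N A (Phi x)))
    rw [h2] at h3
    linarith
  -- key bound : A * ‖hpart (J (Phi x))‖ ≤ K * ‖x‖
  have hBkey : ∀ x : Conf N, A * ‖hpart (J (Phi x))‖ ≤ K * ‖x‖ := by
    intro x
    rcases le_total A 1 with hA1 | hA1
    · have h1 := hB1 x
      have h2 : A * ‖hpart (J (Phi x))‖ ≤ A * ((A⁻¹ + ε) * ‖x‖) :=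
        mul_le_mul_of_nonneg_left h1 hA.le
      have h3 : A * ((A⁻¹ + ε) * ‖x‖) = (1 + A * ε) * ‖x‖ := by
        rw [show A * ((A⁻¹ + ε) * ‖x‖) = (A * A⁻¹ + A * ε) * ‖x‖ by ring,
          mul_inv_cancel₀ hA.ne']
      rw [h3] at h2
      have h4 : (1 + A * ε) * ‖x‖ ≤ K * ‖x‖ := by
        have : 1 + A * ε ≤ K := by nlinarith [sq_nonneg ε]
        exact mul_le_mul_of_nonneg_right this (norm_nonneg x)
      linarith
    · -- use J² = -1
      set z := J (Phi x) with hz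
      have hzn : ‖z‖ ≤ (A⁻¹ + ε) * ‖x‖ := hJPhi x
      have hv1 : vpart (J z) = -x := by
        rw [hz, hJ2, vpart_neg, vpart_Phi]
      have hv2 : vpart (JA N A z) = A • hpart z := vpart_JA A z
      have h1 : ‖vpart (J z) - vpart (JA N A z)‖ ≤ ε * ‖z‖ := by
        rw [← vpart_sub]
        calc ‖vpart (J z - JA N A z)‖ ≤ ‖J z - JA N A z‖ := norm_vpart_le _
          _ ≤ ε * ‖z‖ := hEb _
      rw [hv1, hv2] at h1
      have h2 : ‖A • hpart z‖ ≤ ‖x‖ + ε * ‖z‖ := by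
        have h3 : ‖A • hpart z‖ = ‖(-x - A • hpart z) - (-x)‖ := by
          rw [show (-x - A • hpart z) - (-x) = -(A • hpart z) by abel, norm_neg]
        rw [h3]
        calc ‖(-x - A • hpart z) - (-x)‖ ≤ ‖-x - A • hpart z‖ + ‖-x‖ := norm_sub_le _ _
          _ ≤ ε * ‖z‖ + ‖x‖ := by rw [norm_neg]; linarith
          _ = ‖x‖ + ε * ‖z‖ := by ring
      rw [norm_smul, Real.norm_eq_abs, abs_of_pos hA] at h2
      have hinv : A⁻¹ ≤ 1 := inv_le_one_of_one_le₀ hA1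
      have h4 : ε * ‖z‖ ≤ ε * ((A⁻¹ + ε) * ‖x‖) := mul_le_mul_of_nonneg_left hzn hε.le
      have h5 : ε * ((A⁻¹ + ε) * ‖x‖) ≤ (ε + ε^2) * ‖x‖ := by
        nlinarith [mul_nonneg (mul_nonneg hε.le (by linarith : (0:ℝ) ≤ 1 - A⁻¹))
          (norm_nonneg x)]
      calc A * ‖hpart (J (Phi x))‖ = A * ‖hpart z‖ := by rw [hz]
        _ ≤ ‖x‖ + ε * ‖z‖ := h2
        _ ≤ ‖x‖ + (ε + ε^2) * ‖x‖ := by linarith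
        _ = K * ‖x‖ := by rw [hK]; ring
  -- quadratic form bound on Lagrangian subspace
  have hKey : ∀ x : Conf N, A * dlam (J (Phi x)) (Phi x) ≤ K * ‖x‖^2 := by
    intro x
    have hd : dlam (J (Phi x)) (Phi x) = -⟪hpart (J (Phi x)), x⟫ := by
      rw [dlam, hpart_Phi, vpart_Phi, inner_zero_right]
      ring
    have habs : dlam (J (Phi x)) (Phi x) ≤ ‖hpart (J (Phi x))‖ * ‖x‖ := by
      rw [hd]
      have := abs_real_inner_le_norm (hpart (J (Phi x))) x
      linarith [neg_abs_le ⟪hpart (J (Phi x)), x⟫]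
    have h1 : A * dlam (J (Phi x)) (Phi x) ≤ A * (‖hpart (J (Phi x))‖ * ‖x‖) :=
      mul_le_mul_of_nonneg_left habs hA.le
    have h2 : A * (‖hpart (J (Phi x))‖ * ‖x‖) ≤ (K * ‖x‖) * ‖x‖ := by
      rw [show A * (‖hpart (J (Phi x))‖ * ‖x‖) = (A * ‖hpart (J (Phi x))‖) * ‖x‖ by ring]
      exact mul_le_mul_of_nonneg_right (hBkey x) (norm_nonneg x)
    calc A * dlam (J (Phi x)) (Phi x) ≤ A * (‖hpart (J (Phi x))‖ * ‖x‖) := h1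
      _ ≤ (K * ‖x‖) * ‖x‖ := h2
      _ = K * ‖x‖^2 := by ring
  -- main quantities
  set x₁ := hpart ξ with hx₁
  set x₂ := hpart (J ξ) with hx₂
  set D := dlam (J ξ) ξ with hDdef
  have hD : 0 < D := hposdef ξ hξ
  set w : Phase N := -(J (Phi x₁)) - Phi x₂ with hw
  set S : ℝ := ‖x₁‖^2 + ‖x₂‖^2 with hS
  clear_value x₁ x₂ D w S
  have hS0 : 0 ≤ S := by rw [hS]; positivity
  have hJw : J w = Phi x₁ - J (Phi x₂) := by
    rw [hw, map_sub, map_neg, hJ2, neg_neg]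
  have hSw : dlam (J w) ξ = S := by
    rw [hJw, dlam_sub_left]
    have e1 : dlam (Phi x₁) ξ = ‖x₁‖^2 := by
      rw [dlam, hpart_Phi, vpart_Phi, inner_zero_left, ← hx₁,
        real_inner_self_eq_norm_sq]
      ring
    have e2 : dlam (J (Phi x₂)) ξ = -‖x₂‖^2 := by
      rw [hsymm, dlam, hpart_Phi, vpart_Phi, inner_zero_right, ← hx₂,
        real_inner_self_eq_norm_sq]
      ring
    rw [e1, e2, hS]
    ring
  have c1 : dlam (Phi x₁) (Phi x₂) = 0 := by
    simp [dlam, hpart_Phi, vpart_Phi]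
  have hww : dlam (J w) w = dlam (J (Phi x₁)) (Phi x₁) + dlam (J (Phi x₂)) (Phi x₂) := by
    rw [hJw, hw, dlam_sub_left, dlam_sub_right, dlam_sub_right, dlam_neg_right,
      dlam_neg_right]
    have c2 : dlam (Phi x₁) (J (Phi x₁)) = -dlam (J (Phi x₁)) (Phi x₁) :=
      dlam_antisymm _ _
    have c3 : dlam (J (Phi x₂)) (J (Phi x₁)) = 0 := by
      rw [hsymm, hJ2, dlam_neg_left, c1, neg_zero]
    have c4 : dlam (J (Phi x₂)) (Phi x₂) = dlam (J (Phi x₂)) (Phi x₂) := rfl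
    rw [c1, c2, c3]
    ring
  -- Cauchy-Schwarz for the positive form
  have hq : ∀ t : ℝ, 0 ≤ dlam (J w) w + 2*t*S + t^2 * D := by
    intro t
    have hnn : 0 ≤ dlam (J (w + t • ξ)) (w + t • ξ) := by
      rcases eq_or_ne (w + t • ξ) 0 with h | h
      · rw [h, map_zero, dlam_zero_zero]
      · exact (hposdef _ h).le
    have hexp : dlam (J (w + t • ξ)) (w + t • ξ)
        = dlam (J w) w + 2*t*(dlam (J w) ξ) + t^2 * D := by
      simp only [map_add, map_smul, dlam_add_left, dlam_add_right,
        dlam_smul_left, dlam_smul_right]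
      rw [hsymm ξ w, hDdef]
      ring
    rw [hexp, hSw] at hnn
    exact hnn
  have hCS : S^2 ≤ dlam (J w) w * D := by
    have hb := hq (-S/D)
    have e : dlam (J w) w + 2 * (-S/D) * S + (-S/D)^2 * D
        = dlam (J w) w - S^2/D := by
      field_simp
      ring
    rw [e] at hb
    have h1 : S^2/D ≤ dlam (J w) w := by linarith
    have := (div_le_iff₀ hD).mp h1
    linarith
  have hAw : A * dlam (J w) w ≤ K * S := by
    rw [hww, mul_add, hS, mul_add]
    have k1 := hKey x₁
    have k2 := hKey x₂
    linarith
  have hKD : A * S ≤ K * D := by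
    rcases eq_or_lt_of_le hS0 with h | h
    · have e0 : A * S = 0 := by rw [← h, mul_zero]
      rw [e0]
      have hK0 : 0 < K := by rw [hK]; positivity
      positivity
    · have h1 : A * S^2 ≤ A * (dlam (J w) w * D) := by
        exact mul_le_mul_of_nonneg_left hCS hA.le
      have h2 : A * (dlam (J w) w * D) = (A * dlam (J w) w) * D := by ring
      have h3 : (A * dlam (J w) w) * D ≤ (K * S) * D :=
        mul_le_mul_of_nonneg_right hAw hD.le
      have e1 : (A*S)*S = A*S^2 := by ring
      have e2 : (K*D)*S = (K*S)*D := by ring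
      have h4 : (A * S) * S ≤ (K * D) * S := by linarith
      exact le_of_mul_le_mul_right h4 h
  -- the perturbation term
  have hT : -(A * ‖x₂‖ * ‖x₁‖) ≤ ⟪rotAct c x₂, x₁⟫ := by
    have h1 := abs_real_inner_le_norm (rotAct c x₂) x₁
    have h2 := rotAct_norm_le c A hA.le hc x₂
    have h3 : ‖rotAct c x₂‖ * ‖x₁‖ ≤ A * ‖x₂‖ * ‖x₁‖ := by
      nlinarith [norm_nonneg x₁]
    linarith [neg_abs_le ⟪rotAct c x₂, x₁⟫]
  have hAM : A * ‖x₂‖ * ‖x₁‖ ≤ (A/2) * S := by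
    rw [hS]
    nlinarith [sq_nonneg (‖x₁‖ - ‖x₂‖), hA.le, norm_nonneg x₁, norm_nonneg x₂]
  have hTB : -((1/2) * (K * D)) ≤ ⟪rotAct c x₂, x₁⟫ := by
    have e : (A/2) * S = (A * S)/2 := by ring
    linarith
  have hK32 : K < 3/2 := by
    rw [hK]
    nlinarith [mul_lt_mul_of_pos_left hε7 hε]
  have h9 : K * D < (3/2) * D := mul_lt_mul_of_pos_right hK32 hD
  linarith
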